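/- Let E, F be Hilbert C*-modules and T : E → F a linear bijection preserving the triple product {x,y,z} = x⟨y,z⟩ (i.e., T(x⟨y,z⟩) = Tx⟨Ty,Tz⟩ for all x,y,z ∈ E). Then T is an isometry: ‖Tx‖ = ‖x‖ for all x ∈ E. -/

import Mathlib

open scoped RightActions ComplexOrder

/-- The Hilbert C⋆-module class as it stood in Mathlib of December 2024 (right action of `Aᵐᵒᵖ`,
`⟪x, y <• a⟫ = ⟪x, y⟫ * a`); Mathlib's `CStarModule` is now a left-action class. -/
class CStarModuleRight (A E : Type*) [NonUnitalSemiring A] [StarRing A]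
    [Module ℂ A] [AddCommGroup E] [Module ℂ E] [PartialOrder A] [SMul Aᵐᵒᵖ E] [Norm A] [Norm E]
    extends Inner A E where
  inner_add_right {x} {y} {z} : inner x (y + z) = inner x y + inner x z
  inner_self_nonneg {x} : 0 ≤ inner x x
  inner_self {x} : inner x x = 0 ↔ x = 0
  inner_op_smul_right {a : A} {x y : E} : inner x (y <• a) = inner x y * a
  inner_smul_right_complex {z : ℂ} {x} {y} : inner x (z • y) = z • inner x y
  star_inner x y : star (inner x y) = inner y x
  norm_eq_sqrt_norm_inner_self x : ‖x‖ = √‖inner x x‖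

private def geomAux {A : Type*} [NonUnitalNonAssocSemiring A] (c : A) : ℕ → A
  | 0 => c
  | n + 1 => c * geomAux c n

section Aux

variable {A E : Type*}
    [NonUnitalCStarAlgebra A] [PartialOrder A] [StarOrderedRing A]
    [AddCommGroup E] [Module ℂ E] [SMul Aᵐᵒᵖ E] [Norm E] [CStarModuleRight A E]

open CStarModuleRight

theorem CStarModuleRight.inner_sub_right {x y z : E} :
    inner A x (y - z) = inner A x y - inner A x z := by
  have h := CStarModuleRight.inner_add_right (A := A) (x := x) (y := y - z) (z := z)
  rw [sub_add_cancel] at h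
  rw [h, add_sub_cancel_right]

theorem CStarModuleRight.norm_sq_eq {x : E} : ‖x‖ ^ 2 = ‖inner A x x‖ := by
  rw [CStarModuleRight.norm_eq_sqrt_norm_inner_self (A := A) x]
  exact Real.sq_sqrt (_root_.norm_nonneg _)

private lemma ext_inner_aux {u v : E} (h : ∀ z : E, inner A z u = inner A z v) : u = v := by
  have h2 : inner A (u - v) (u - v) = 0 := by
    rw [CStarModuleRight.inner_sub_right, h (u - v), sub_self]
  exact sub_eq_zero.mp (CStarModuleRight.inner_self.mp h2)

private lemma op_smul_sub_aux (x : E) (c d : A) : x <• (c - d) = x <• c - x <• d := by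
  refine ext_inner_aux (A := A) fun z => ?_
  rw [CStarModuleRight.inner_op_smul_right, CStarModuleRight.inner_sub_right,
    CStarModuleRight.inner_op_smul_right, CStarModuleRight.inner_op_smul_right, mul_sub]

private lemma op_smul_csmul_aux (x : E) (z : ℂ) (c : A) : x <• (z • c) = z • (x <• c) := by
  refine ext_inner_aux (A := A) fun w => ?_
  rw [CStarModuleRight.inner_op_smul_right, CStarModuleRight.inner_smul_right_complex,
    CStarModuleRight.inner_op_smul_right, mul_smul_comm]

variable {B F : Type*}
    [NonUnitalCStarAlgebra B] [PartialOrder B] [StarOrderedRing B]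
    [AddCommGroup F] [Module ℂ F] [SMul Bᵐᵒᵖ F] [Norm F] [CStarModuleRight B F]

set_option maxHeartbeats 2000000 in
/-- A triple homomorphism between Hilbert C*-modules is contractive. -/
private theorem triple_hom_contractive (T : E →ₗ[ℂ] F)
    (htriple : ∀ x y z : E, T (x <• (inner A y z : A)) = T x <• (inner B (T y) (T z) : B))
    (x : E) : ‖T x‖ ≤ ‖x‖ := by
  by_contra hlt
  push_neg at hlt
  set a : A := inner A x x with ha_def
  set b : B := inner B (T x) (T x) with hb_def
  have hb_nonneg : (0 : B) ≤ b := CStarModuleRight.inner_self_nonneg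
  set β : ℝ := ‖b‖ with hβ_def
  have hxnn : (0 : ℝ) ≤ ‖x‖ := by
    rw [CStarModuleRight.norm_eq_sqrt_norm_inner_self (A := A) x]; exact Real.sqrt_nonneg _
  have hβ : ‖T x‖ ^ 2 = β := CStarModuleRight.norm_sq_eq
  have hα : ‖x‖ ^ 2 = ‖a‖ := CStarModuleRight.norm_sq_eq
  have hab : ‖a‖ < β := by
    rw [← hα, ← hβ]
    exact pow_lt_pow_left₀ hlt hxnn (by norm_num)
  have hβpos : (0 : ℝ) < β := lt_of_le_of_lt (norm_nonneg a) hab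
  have hβC : ((β : ℂ)) ≠ 0 := by
    exact_mod_cast hβpos.ne'
  -- the geometric series giving the quasi-inverse of `a / β`
  set c : A := (β : ℂ)⁻¹ • a with hc_def
  have hc_norm : ‖c‖ < 1 := by
    rw [hc_def, norm_smul]
    rw [norm_inv, Complex.norm_real, Real.norm_of_nonneg hβpos.le]
    rw [inv_mul_lt_iff₀ hβpos, mul_one]
    exact hab
  have hgeo : Summable (fun n : ℕ => ‖c‖ ^ (n + 1)) := by
    simpa [pow_succ'] using
      (summable_geometric_of_lt_one (norm_nonneg c) hc_norm).mul_left ‖c‖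
  have hp_norm : ∀ n, ‖geomAux c n‖ ≤ ‖c‖ ^ (n + 1) := by
    intro n
    induction n with
    | zero => rw [pow_one]; exact le_of_eq rfl
    | succ n ih =>
        calc ‖geomAux c (n + 1)‖ = ‖c * geomAux c n‖ := rfl
          _ ≤ ‖c‖ * ‖geomAux c n‖ := norm_mul_le _ _
          _ ≤ ‖c‖ * ‖c‖ ^ (n + 1) := mul_le_mul_of_nonneg_left ih (norm_nonneg c)
          _ = ‖c‖ ^ (n + 2) := (pow_succ' _ _).symm
  have hsum : Summable (geomAux c) :=
    Summable.of_norm (Summable.of_nonneg_of_le (fun n => norm_nonneg _) hp_norm hgeo)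
  set y : A := ∑' n : ℕ, geomAux c n with hy_def
  have hcy : c * y = y - c := by
    have h1 : c * y = ∑' n : ℕ, geomAux c (n + 1) := by
      rw [hy_def, ← hsum.tsum_mul_left c]
      exact tsum_congr fun n => rfl
    have h2 : y = geomAux c 0 + ∑' n : ℕ, geomAux c (n + 1) := Summable.tsum_eq_zero_add hsum
    rw [h1]
    conv_rhs => rw [h2]
    show _ = _ + _ - c
    rw [show geomAux c 0 = c from rfl]
    abel
  set q : A := -y with hq_def
  have haq : a * q - a = (β : ℂ) • q := by
    have hac : a = (β : ℂ) • c := by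
      rw [hc_def, smul_smul, mul_inv_cancel₀ hβC, one_smul]
    calc a * q - a = (β : ℂ) • (c * q - c) := by
          rw [hac, smul_mul_assoc, smul_sub]
      _ = (β : ℂ) • q := by
          rw [hq_def, mul_neg, hcy]
          congr 1
          abel
  set v : E := x <• q with hv_def
  set e : B := inner B (T x) (T v) with he_def
  -- compute T v
  have hq_eq : q = (β : ℂ)⁻¹ • (a * q - a) := by
    rw [haq, inv_smul_smul₀ hβC]
  have haq' : a * q = inner A x v := by
    rw [hv_def, CStarModuleRight.inner_op_smul_right, ← ha_def]
  have hTv : T v = (β : ℂ)⁻¹ • (T x <• e - T x <• b) := by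
    calc T v = T (x <• ((β : ℂ)⁻¹ • (a * q - a))) := by rw [hv_def, ← hq_eq]
      _ = (β : ℂ)⁻¹ • T (x <• (a * q) - x <• a) := by
          rw [op_smul_csmul_aux, map_smul, op_smul_sub_aux]
      _ = (β : ℂ)⁻¹ • (T (x <• (a * q)) - T (x <• a)) := by rw [map_sub]
      _ = (β : ℂ)⁻¹ • (T x <• e - T x <• b) := by
          rw [haq', ha_def, htriple x x v, htriple x x x, ← hb_def, ← he_def]
  -- the key identity : β • e = b * e - b * b
  have hkey : (β : ℂ) • e = b * e - b * b := by
    have h1 : e = (β : ℂ)⁻¹ • (b * e - b * b) := by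
      conv_lhs => rw [he_def, hTv]
      rw [CStarModuleRight.inner_smul_right_complex, CStarModuleRight.inner_sub_right,
        CStarModuleRight.inner_op_smul_right, CStarModuleRight.inner_op_smul_right, ← hb_def]
    nth_rewrite 1 [h1]
    rw [smul_inv_smul₀ hβC]
  have hbb : b * e - (β : ℝ) • e = b * b := by
    rw [← Complex.coe_smul β e, hkey]
    abel
  -- continuous functional calculus contradiction
  have hb_sa : IsSelfAdjoint b := .of_nonneg hb_nonneg
  set δ : ℝ := min β (β ^ 2 / (2 * (‖e‖ + 1))) with hδ_def
  have hepos : (0 : ℝ) < ‖e‖ + 1 := by positivity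
  have hδpos : (0 : ℝ) < δ := lt_min hβpos (by positivity)
  have hδβ : δ ≤ β := min_le_left _ _
  set f : ℝ → ℝ := fun t => max 0 (1 - (β - t) / δ) with hf_def
  have hf_cont : Continuous f := by
    apply continuous_const.max
    fun_prop
  have hf0 : f 0 = 0 := by
    rw [hf_def]
    simp only [sub_zero]
    rw [max_eq_left]
    rw [sub_nonpos]
    rw [le_div_iff₀ hδpos, one_mul]
    exact hδβ
  have hfβ : f β = 1 := by simp [hf_def]
  have hf_nonneg : ∀ t, 0 ≤ f t := fun t => le_max_left _ _
  have hf_le_one : ∀ t, t ≤ β → f t ≤ 1 := by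
    intro t ht
    refine max_le zero_le_one ?_
    have : 0 ≤ (β - t) / δ := div_nonneg (by linarith) hδpos.le
    linarith
  -- quasispectrum facts
  have hspec_le : ∀ t ∈ quasispectrum ℝ b, t ≤ β := by
    intro t ht
    rw [Unitization.quasispectrum_eq_spectrum_inr' ℝ ℂ b] at ht
    have := spectrum.norm_le_norm_of_mem ht
    rw [Unitization.norm_inr] at this
    calc t ≤ |t| := le_abs_self t
      _ = ‖t‖ := rfl
      _ ≤ ‖b‖ := this
  have hβ_mem : β ∈ quasispectrum ℝ b := by
    rw [Unitization.quasispectrum_eq_spectrum_inr' ℝ ℂ b]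
    have hb' : (0 : Unitization ℂ B) ≤ (b : Unitization ℂ B) :=
      Unitization.inr_nonneg_iff.mpr hb_nonneg
    have := CStarAlgebra.norm_mem_spectrum_of_nonneg hb'
    rwa [Unitization.norm_inr] at this
  -- bound on g t = f t * t - β * f t on the quasispectrum
  set g : ℝ → ℝ := fun t => f t * t - β * f t with hg_def
  have hg_cont : Continuous g := by fun_prop
  have hg0 : g 0 = 0 := by simp [hg_def, hf0]
  have hg_bound : ∀ t ∈ quasispectrum ℝ b, ‖g t‖ ≤ δ := by
    intro t ht
    have htβ : t ≤ β := hspec_le t ht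
    rw [hg_def]
    simp only [Real.norm_eq_abs]
    have : f t * t - β * f t = -(f t * (β - t)) := by ring
    rw [this, abs_neg]
    rcases le_or_gt (β - t) δ with hcase | hcase
    · rw [abs_of_nonneg (mul_nonneg (hf_nonneg t) (by linarith))]
      calc f t * (β - t) ≤ 1 * δ := by
            exact mul_le_mul (hf_le_one t htβ) hcase (by linarith) zero_le_one
        _ = δ := one_mul δ
    · have hft : f t = 0 := by
        rw [hf_def]
        refine max_eq_left ?_
        rw [sub_nonpos, le_div_iff₀ hδpos, one_mul]
        exact hcase.le
      rw [hft]
      simp [hδpos.le]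
  -- assemble via cfcₙ
  have hid_cont : ContinuousOn (fun t : ℝ => t) (quasispectrum ℝ b) := continuousOn_id
  have hmulid : ∀ h : ℝ → ℝ, Continuous h → h 0 = 0 →
      cfcₙ h b * b = cfcₙ (fun t : ℝ => h t * t) b := by
    intro h hc h0
    have h1 := cfcₙ_mul h (fun t : ℝ => t) b hc.continuousOn h0 hid_cont rfl
    rw [cfcₙ_id' ℝ b hb_sa] at h1
    exact h1.symm
  have h_mul : cfcₙ f b * b = cfcₙ (fun t : ℝ => f t * t) b :=
    hmulid f hf_cont hf0
  have h_mul2 : cfcₙ (fun t : ℝ => f t * t) b * b = cfcₙ (fun t : ℝ => f t * t * t) b :=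
    hmulid _ (by fun_prop) (by simp [hf0])
  have h_smul : cfcₙ (fun t : ℝ => β * f t) b = β • cfcₙ f b := by
    have h1 := cfcₙ_smul (R := ℝ) β f b hf_cont.continuousOn hf0
    rw [← h1]
    refine cfcₙ_congr fun t _ => ?_
    simp [smul_eq_mul]
  have h_g : cfcₙ g b = cfcₙ f b * b - β • cfcₙ f b := by
    rw [hg_def]
    have h1 := cfcₙ_sub (fun t : ℝ => f t * t) (fun t : ℝ => β * f t) b
      (by fun_prop) (by simp [hf0]) (by fun_prop) (by simp [hf0])
    rw [h1, h_mul, h_smul]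
  -- the two sides
  have h_eq : cfcₙ g b * e = cfcₙ (fun t : ℝ => f t * t * t) b := by
    have h1 : cfcₙ g b * e = cfcₙ f b * (b * e - (β : ℝ) • e) := by
      rw [h_g, sub_mul, mul_sub, mul_assoc, smul_mul_assoc, mul_smul_comm]
    rw [h1, hbb, ← mul_assoc, h_mul, h_mul2]
  have h_upper : ‖cfcₙ g b * e‖ < β ^ 2 := by
    calc ‖cfcₙ g b * e‖ ≤ ‖cfcₙ g b‖ * ‖e‖ := norm_mul_le _ _
      _ ≤ δ * ‖e‖ := by
          refine mul_le_mul_of_nonneg_right ?_ (norm_nonneg e)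
          exact norm_cfcₙ_le hg_bound
      _ ≤ (β ^ 2 / (2 * (‖e‖ + 1))) * ‖e‖ := by
          refine mul_le_mul_of_nonneg_right (min_le_right _ _) (norm_nonneg e)
      _ < β ^ 2 := by
          rw [div_mul_eq_mul_div, div_lt_iff₀ (by positivity)]
          have h1 : ‖e‖ < 2 * (‖e‖ + 1) := by nlinarith [norm_nonneg e]
          nlinarith [sq_nonneg β, hβpos]
  have h_lower : β ^ 2 ≤ ‖cfcₙ (fun t : ℝ => f t * t * t) b‖ := by
    have := norm_apply_le_norm_cfcₙ (fun t : ℝ => f t * t * t) b hβ_mem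
      (by fun_prop) (by simp [hf0]) hb_sa
    calc β ^ 2 = ‖f β * β * β‖ := by
          rw [hfβ, one_mul]
          rw [Real.norm_of_nonneg (by positivity)]
          ring
      _ ≤ _ := this
  rw [h_eq] at h_upper
  exact absurd h_lower (not_le.mpr h_upper)

end Aux

/-- A linear bijection between Hilbert C*-modules preserving the triple product
`{x,y,z} = x⟨y,z⟩` is an isometry. -/
theorem triple_hom_isometry
    {A B E F : Type*}
    [NonUnitalCStarAlgebra A] [PartialOrder A] [StarOrderedRing A]
    [NonUnitalCStarAlgebra B] [PartialOrder B] [StarOrderedRing B]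
    [AddCommGroup E] [Module ℂ E] [SMul Aᵐᵒᵖ E] [Norm E] [CStarModuleRight A E]
    [AddCommGroup F] [Module ℂ F] [SMul Bᵐᵒᵖ F] [Norm F] [CStarModuleRight B F]
    (T : E →ₗ[ℂ] F) (hbij : Function.Bijective T)
    (htriple : ∀ x y z : E, T (x <• (inner A y z : A)) = T x <• (inner B (T y) (T z) : B)) :
    ∀ x : E, ‖T x‖ = ‖x‖ := by
  intro x
  let S : E ≃ₗ[ℂ] F := LinearEquiv.ofBijective T hbij
  have hTS : ∀ w : F, T (S.symm w) = w := fun w => S.apply_symm_apply w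
  have htriple' : ∀ u v w : F,
      S.symm.toLinearMap (u <• (inner B v w : B)) =
        S.symm.toLinearMap u <• (inner A (S.symm.toLinearMap v) (S.symm.toLinearMap w) : A) := by
    intro u v w
    apply hbij.injective
    calc T (S.symm.toLinearMap (u <• (inner B v w : B)))
        = u <• (inner B v w : B) := hTS _
      _ = T (S.symm u) <• (inner B (T (S.symm v)) (T (S.symm w)) : B) := by
          rw [hTS, hTS, hTS]
      _ = T (S.symm.toLinearMap u <•
            (inner A (S.symm.toLinearMap v) (S.symm.toLinearMap w) : A)) :=
          (htriple _ _ _).symm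
  have h1 : ‖T x‖ ≤ ‖x‖ := triple_hom_contractive T htriple x
  have h2 : ‖x‖ ≤ ‖T x‖ := by
    have h3 := triple_hom_contractive S.symm.toLinearMap htriple' (T x)
    have h4 : S.symm.toLinearMap (T x) = x := S.symm_apply_apply x
    rw [h4] at h3
    exact h3
  exact le_antisymm h1 h2
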